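/- arXiv:0909.1828 — 5 statements merged into one kernel-verified Lean document; each statement's English description precedes it below -/
import Mathlib

section
/- If f : D → C is holomorphic on the open unit disk with |f(z)| ≤ 1 for all z, then the kernel K(z,w) = (1 - f(z)·conj(f(w)))/(1 - z·conj(w)) is positive semi-definite on D, i.e., for every finite set of points z_1,...,z_m in D and scalars c_1,...,c_m, the sum over i,j of c_i·conj(c_j)·K(z_i,z_j) is nonnegative. -/
open Complex Finset ComplexOrder

namespace PickAux

open Metric intervalIntegral
open scoped Real

lemma kden_ne {r : ℝ} (hr0 : 0 < r) {a w : ℂ} (ha : ‖a‖ < r) (hw : ‖w‖ ≤ r) :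
    (1 : ℂ) - w * (starRingEnd ℂ) a / (r : ℂ) ^ 2 ≠ 0 := by
  have h : ‖w * (starRingEnd ℂ) a / (r : ℂ) ^ 2‖ < 1 := by
    rw [norm_div, norm_mul, RCLike.norm_conj, norm_pow, Complex.norm_real, Real.norm_eq_abs,
      abs_of_pos hr0, div_lt_one (by positivity)]
    calc ‖w‖ * ‖a‖ ≤ r * ‖a‖ := by gcongr
    _ < r * r := by exact mul_lt_mul_of_pos_left ha hr0
    _ = r ^ 2 := (sq r).symm
  intro h0
  rw [sub_eq_zero] at h0
  rw [← h0] at h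
  simp at h


lemma norm_circleMap {r : ℝ} (hr0 : 0 < r) (θ : ℝ) : ‖circleMap 0 r θ‖ = r := by
  simpa [norm_circleMap_zero] using abs_of_pos hr0

/-- continuity in θ of the conjugated kernel factor -/

lemma intervalIntegral_conj {a b : ℝ} (F : ℝ → ℂ) :
    ∫ θ in a..b, (starRingEnd ℂ) (F θ) = (starRingEnd ℂ) (∫ θ in a..b, F θ) := by
  simp only [intervalIntegral, ← integral_conj, map_sub]


lemma repro {r : ℝ} (hr0 : 0 < r) {u : ℂ → ℂ} (hu : DiffContOnCl ℂ u (ball 0 r))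
    {a : ℂ} (ha : ‖a‖ < r) :
    (∫ θ in (0:ℝ)..(2*π), u (circleMap 0 r θ) *
      (starRingEnd ℂ) (((1:ℂ) - circleMap 0 r θ * (starRingEnd ℂ) a / (r:ℂ)^2)⁻¹))
      = ((2 * π : ℝ) : ℂ) * u a := by
  have key : ∀ θ : ℝ, u (circleMap 0 r θ) *
      (starRingEnd ℂ) (((1:ℂ) - circleMap 0 r θ * (starRingEnd ℂ) a / (r:ℂ)^2)⁻¹)
      = (-Complex.I) * (deriv (circleMap 0 r) θ •
          ((circleMap 0 r θ - a)⁻¹ • u (circleMap 0 r θ))) := by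
    intro θ
    set w := circleMap 0 r θ with hwdef
    have hwr : ‖w‖ = r := by
      rw [hwdef]
      simpa [norm_circleMap_zero] using abs_of_pos hr0
    have hw0 : w ≠ 0 := by
      intro h; rw [h, norm_zero] at hwr; exact hr0.ne hwr
    have hwa : w - a ≠ 0 := by
      intro h
      rw [sub_eq_zero] at h
      rw [h] at hwr
      exact absurd hwr (ne_of_lt ha)
    have hmc : w * (starRingEnd ℂ) w = (r:ℂ)^2 := by
      rw [Complex.mul_conj]
      norm_cast
      rw [← hwr, Complex.normSq_eq_norm_sq]
    have hden : (1:ℂ) - (starRingEnd ℂ) w * a / (r:ℂ)^2 = (w - a) / w := by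
      have hr : ((r:ℂ))^2 ≠ 0 := by
        simpa using Complex.ofReal_ne_zero.2 hr0.ne'
      field_simp
      linear_combination -a * hmc
    rw [deriv_circleMap, smul_eq_mul, smul_eq_mul, map_inv₀, map_sub, map_one, map_div₀,
      map_mul, Complex.conj_conj, map_pow, Complex.conj_ofReal, ← hwdef, hden, inv_div]
    field_simp
    ring_nf
    simp [Complex.I_sq]
  rw [intervalIntegral.integral_congr (fun θ _ => key θ),
    intervalIntegral.integral_const_mul]
  have hcauchy := hu.circleIntegral_sub_inv_smul
    (show a ∈ ball (0:ℂ) r by simpa [mem_ball, dist_zero_right] using ha)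
  rw [show (∫ θ in (0:ℝ)..(2*π), deriv (circleMap 0 r) θ •
      ((circleMap 0 r θ - a)⁻¹ • u (circleMap 0 r θ)))
      = ∮ z in C(0, r), (z - a)⁻¹ • u z from rfl, hcauchy, smul_eq_mul]
  push_cast
  linear_combination (-(2 * (π:ℂ) * u a)) * Complex.I_mul_I


lemma kcont {r : ℝ} (hr0 : 0 < r) {a : ℂ} (ha : ‖a‖ < r) :
    Continuous (fun θ : ℝ =>
      (starRingEnd ℂ) (((1:ℂ) - circleMap 0 r θ * (starRingEnd ℂ) a / (r:ℂ)^2)⁻¹)) := by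
  apply Complex.continuous_conj.comp
  apply Continuous.inv₀
  · fun_prop
  · intro θ
    exact kden_ne hr0 ha (le_of_eq (norm_circleMap hr0 θ))


lemma ucont {r : ℝ} (hr0 : 0 < r) {u : ℂ → ℂ} (hu : ContinuousOn u (closedBall 0 r)) :
    Continuous (fun θ : ℝ => u (circleMap 0 r θ)) :=
  hu.comp_continuous (continuous_circleMap 0 r)
    (fun θ => circleMap_mem_closedBall 0 hr0.le θ)


lemma repro_sum {r : ℝ} (hr0 : 0 < r) {u : ℂ → ℂ} (hu : DiffContOnCl ℂ u (ball 0 r))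
    {m : ℕ} {z : Fin m → ℂ} (hz : ∀ i, ‖z i‖ < r) (d : Fin m → ℂ)
    (hrepro : ∀ (a : ℂ), ‖a‖ < r → (∫ θ in (0:ℝ)..(2*π), u (circleMap 0 r θ) *
      (starRingEnd ℂ) (((1:ℂ) - circleMap 0 r θ * (starRingEnd ℂ) a / (r:ℂ)^2)⁻¹))
      = ((2 * π : ℝ) : ℂ) * u a) :
    (∫ θ in (0:ℝ)..(2*π), u (circleMap 0 r θ) *
      (starRingEnd ℂ) (∑ j, d j * ((1:ℂ) - circleMap 0 r θ * (starRingEnd ℂ) (z j) / (r:ℂ)^2)⁻¹))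
      = ((2 * π : ℝ) : ℂ) * ∑ j, (starRingEnd ℂ) (d j) * u (z j) := by
  have hucont : Continuous (fun θ : ℝ => u (circleMap 0 r θ)) := by
    apply ucont hr0
    have := hu.continuousOn
    rwa [closure_ball (0:ℂ) hr0.ne'] at this
  have key : ∀ θ : ℝ, u (circleMap 0 r θ) *
      (starRingEnd ℂ) (∑ j, d j * ((1:ℂ) - circleMap 0 r θ * (starRingEnd ℂ) (z j) / (r:ℂ)^2)⁻¹)
      = ∑ j, (starRingEnd ℂ) (d j) * (u (circleMap 0 r θ) *
          (starRingEnd ℂ) (((1:ℂ) - circleMap 0 r θ * (starRingEnd ℂ) (z j) / (r:ℂ)^2)⁻¹)) := by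
    intro θ
    rw [map_sum, Finset.mul_sum]
    refine Finset.sum_congr rfl (fun j _ => ?_)
    rw [map_mul]
    ring
  rw [intervalIntegral.integral_congr (fun θ _ => key θ),
    intervalIntegral.integral_finset_sum]
  · rw [Finset.mul_sum]
    refine Finset.sum_congr rfl (fun j _ => ?_)
    rw [intervalIntegral.integral_const_mul, hrepro (z j) (hz j)]
    ring
  · intro j _
    exact (continuous_const.mul (hucont.mul (kcont hr0 (hz j)))).intervalIntegrable _ _


lemma key_ineq (F G GT : ℝ → ℂ) (hF : Continuous F) (hG : Continuous G) (hGT : Continuous GT)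
    (hFb : ∀ θ, ‖F θ‖ ≤ 1) (Sg Sb : ℂ)
    (E1 : ∫ θ in (0:ℝ)..(2*π), G θ * (starRingEnd ℂ) (G θ) = ((2*π:ℝ):ℂ) * Sg)
    (E2 : ∫ θ in (0:ℝ)..(2*π), (F θ * GT θ) * (starRingEnd ℂ) (G θ) = ((2*π:ℝ):ℂ) * Sb)
    (E3 : ∫ θ in (0:ℝ)..(2*π), GT θ * (starRingEnd ℂ) (GT θ) = ((2*π:ℝ):ℂ) * Sb) :
    ∃ x : ℝ, 0 ≤ x ∧ Sg - Sb = (x:ℂ) := by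
  have hconj : Continuous (fun w : ℂ => (starRingEnd ℂ) w) := Complex.continuous_conj
  set Rgt : ℝ := ∫ θ in (0:ℝ)..(2*π), Complex.normSq (GT θ) with hRgt
  set Rfgt : ℝ := ∫ θ in (0:ℝ)..(2*π), Complex.normSq (F θ * GT θ) with hRfgt
  set Rdiff : ℝ := ∫ θ in (0:ℝ)..(2*π), Complex.normSq (G θ - F θ * GT θ) with hRdiff
  -- complex integrals of v * conj v are real
  have A3 : (∫ θ in (0:ℝ)..(2*π), GT θ * (starRingEnd ℂ) (GT θ)) = ((Rgt:ℝ):ℂ) := by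
    rw [intervalIntegral.integral_congr (fun θ _ => Complex.mul_conj (GT θ))]
    exact intervalIntegral.integral_ofReal
  have A4 : (∫ θ in (0:ℝ)..(2*π), (F θ * GT θ) * (starRingEnd ℂ) (F θ * GT θ)) = ((Rfgt:ℝ):ℂ) := by
    rw [intervalIntegral.integral_congr (fun θ _ => Complex.mul_conj (F θ * GT θ))]
    exact intervalIntegral.integral_ofReal
  have A5 : (∫ θ in (0:ℝ)..(2*π), (G θ - F θ * GT θ) * (starRingEnd ℂ) (G θ - F θ * GT θ))
      = ((Rdiff:ℝ):ℂ) := by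
    rw [intervalIntegral.integral_congr (fun θ _ => Complex.mul_conj (G θ - F θ * GT θ))]
    exact intervalIntegral.integral_ofReal
  -- integrability
  have i1 : IntervalIntegrable (fun θ => G θ * (starRingEnd ℂ) (G θ)) MeasureTheory.volume 0 (2*π) :=
    (hG.mul (hconj.comp hG)).intervalIntegrable _ _
  have i2 : IntervalIntegrable (fun θ => G θ * (starRingEnd ℂ) (F θ * GT θ)) MeasureTheory.volume 0 (2*π) :=
    (hG.mul (hconj.comp (hF.mul hGT))).intervalIntegrable _ _
  have i3 : IntervalIntegrable (fun θ => (F θ * GT θ) * (starRingEnd ℂ) (G θ)) MeasureTheory.volume 0 (2*π) :=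
    ((hF.mul hGT).mul (hconj.comp hG)).intervalIntegrable _ _
  have i4 : IntervalIntegrable (fun θ => (F θ * GT θ) * (starRingEnd ℂ) (F θ * GT θ)) MeasureTheory.volume 0 (2*π) :=
    ((hF.mul hGT).mul (hconj.comp (hF.mul hGT))).intervalIntegrable _ _
  -- conj integral
  have Aconj : (∫ θ in (0:ℝ)..(2*π), G θ * (starRingEnd ℂ) (F θ * GT θ)) = ((Rgt:ℝ):ℂ) := by
    have hpt : ∀ θ : ℝ, G θ * (starRingEnd ℂ) (F θ * GT θ)
        = (starRingEnd ℂ) ((F θ * GT θ) * (starRingEnd ℂ) (G θ)) := by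
      intro θ
      simp only [map_mul, Complex.conj_conj]
      ring
    rw [intervalIntegral.integral_congr (fun θ _ => hpt θ), intervalIntegral_conj, E2, ← E3, A3]
    simp
  have A2 : (∫ θ in (0:ℝ)..(2*π), (F θ * GT θ) * (starRingEnd ℂ) (G θ)) = ((Rgt:ℝ):ℂ) := by
    rw [E2, ← E3, A3]
  -- expansion
  have hexp : ((Rdiff:ℝ):ℂ) = ((2*π:ℝ):ℂ) * Sg - ((Rgt:ℝ):ℂ) - ((Rgt:ℝ):ℂ) + ((Rfgt:ℝ):ℂ) := by
    rw [← A5, ← E1, ← A4]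
    nth_rewrite 1 [← Aconj]
    nth_rewrite 1 [← A2]
    have hpt : ∀ θ : ℝ, (G θ - F θ * GT θ) * (starRingEnd ℂ) (G θ - F θ * GT θ)
        = (G θ * (starRingEnd ℂ) (G θ) - G θ * (starRingEnd ℂ) (F θ * GT θ))
          - ((F θ * GT θ) * (starRingEnd ℂ) (G θ) - (F θ * GT θ) * (starRingEnd ℂ) (F θ * GT θ)) := by
      intro θ
      rw [map_sub]
      ring
    rw [intervalIntegral.integral_congr (fun θ _ => hpt θ),
      intervalIntegral.integral_sub (i1.sub i2) (i3.sub i4),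
      intervalIntegral.integral_sub i1 i2, intervalIntegral.integral_sub i3 i4]
    ring
  -- real inequalities
  have hmono : Rfgt ≤ Rgt := by
    rw [hRfgt, hRgt]
    apply intervalIntegral.integral_mono_on Real.two_pi_pos.le
    · exact ((Complex.continuous_normSq.comp (hF.mul hGT))).intervalIntegrable _ _
    · exact ((Complex.continuous_normSq.comp hGT)).intervalIntegrable _ _
    · intro θ _
      rw [Complex.normSq_mul]
      have h1 : Complex.normSq (F θ) ≤ 1 := by
        rw [Complex.normSq_eq_norm_sq]
        exact pow_le_one₀ (norm_nonneg _) (hFb θ)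
      calc Complex.normSq (F θ) * Complex.normSq (GT θ)
          ≤ 1 * Complex.normSq (GT θ) := by
            exact mul_le_mul_of_nonneg_right h1 (Complex.normSq_nonneg _)
        _ = Complex.normSq (GT θ) := one_mul _
  have hdiff0 : 0 ≤ Rdiff :=
    intervalIntegral.integral_nonneg Real.two_pi_pos.le (fun θ _ => Complex.normSq_nonneg _)
  -- conclude
  refine ⟨(Rdiff + (Rgt - Rfgt)) / (2*π), div_nonneg (by linarith) (by positivity), ?_⟩
  have h2 : ((2*π:ℝ):ℂ) * (Sg - Sb) = ((Rdiff + (Rgt - Rfgt) : ℝ):ℂ) := by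
    have hSb : ((2*π:ℝ):ℂ) * Sb = ((Rgt:ℝ):ℂ) := by rw [← E3, A3]
    push_cast
    push_cast at hexp hSb
    linear_combination -hexp - hSb
  have hpi : ((2*π:ℝ):ℂ) ≠ 0 := by
    simpa using Complex.ofReal_ne_zero.2 (ne_of_gt Real.two_pi_pos)
  rw [Complex.ofReal_div, eq_div_iff hpi]
  linear_combination h2


noncomputable def gf {m : ℕ} (z d : Fin m → ℂ) (r : ℝ) : ℂ → ℂ :=
  fun w => ∑ j, d j * ((1:ℂ) - w * (starRingEnd ℂ) (z j) / (r:ℂ)^2)⁻¹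


lemma gf_diff {m : ℕ} {z : Fin m → ℂ} (d : Fin m → ℂ) {r : ℝ} (hr0 : 0 < r)
    (hzr : ∀ i, ‖z i‖ < r) :
    DifferentiableOn ℂ (gf z d r) (closedBall 0 r) := by
  apply DifferentiableOn.fun_sum
  intro j _
  refine (differentiableOn_const _).mul (DifferentiableOn.inv ?_ ?_)
  · fun_prop
  · intro w hw
    exact kden_ne hr0 (hzr j) (by simpa [mem_closedBall, dist_zero_right] using hw)


lemma toDCC {r : ℝ} (hr0 : 0 < r) {v : ℂ → ℂ}
    (hv : DifferentiableOn ℂ v (closedBall (0:ℂ) r)) : DiffContOnCl ℂ v (ball 0 r) :=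
  ⟨hv.mono ball_subset_closedBall, by rw [closure_ball (0:ℂ) hr0.ne']; exact hv.continuousOn⟩


lemma pick_r (f : ℂ → ℂ) (hf : DifferentiableOn ℂ f {w : ℂ | ‖w‖ < 1})
    (hb : ∀ w : ℂ, ‖w‖ < 1 → ‖f w‖ ≤ 1)
    {m : ℕ} (z c : Fin m → ℂ) {r : ℝ} (hr0 : 0 < r) (hr1 : r < 1)
    (hzr : ∀ i, ‖z i‖ < r) :
    0 ≤ ∑ i, ∑ j, c i * (starRingEnd ℂ) (c j) *
      ((1 - f (z i) * (starRingEnd ℂ) (f (z j))) /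
        (1 - z i * (starRingEnd ℂ) (z j) / ((r:ℂ))^2)) := by
  have hball : closedBall (0:ℂ) r ⊆ {w : ℂ | ‖w‖ < 1} := by
    intro w hw
    simp only [Set.mem_setOf_eq]
    have : ‖w‖ ≤ r := by simpa [mem_closedBall, dist_zero_right] using hw
    linarith
  have hfc : ContinuousOn f (closedBall 0 r) := hf.continuousOn.mono hball
  have hfd : DifferentiableOn ℂ f (ball 0 r) :=
    hf.mono (subset_trans ball_subset_closedBall hball)
  set g : ℂ → ℂ := gf z (fun j => (starRingEnd ℂ) (c j)) r with hgdef
  set gt : ℂ → ℂ := gf z (fun j => (starRingEnd ℂ) (c j) * (starRingEnd ℂ) (f (z j))) r with hgtdef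
  have hgd : DifferentiableOn ℂ g (closedBall 0 r) := gf_diff _ hr0 hzr
  have hgtd : DifferentiableOn ℂ gt (closedBall 0 r) := gf_diff _ hr0 hzr
  have hgDCC : DiffContOnCl ℂ g (ball 0 r) := toDCC hr0 hgd
  have hgtDCC : DiffContOnCl ℂ gt (ball 0 r) := toDCC hr0 hgtd
  have hfgtDCC : DiffContOnCl ℂ (fun w => f w * gt w) (ball 0 r) :=
    ⟨hfd.mul (hgtd.mono ball_subset_closedBall),
      by rw [closure_ball (0:ℂ) hr0.ne']; exact hfc.mul hgtd.continuousOn⟩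
  have hucont : ∀ {v : ℂ → ℂ}, ContinuousOn v (closedBall (0:ℂ) r) →
      Continuous (fun θ : ℝ => v (circleMap 0 r θ)) := fun hv =>
    hv.comp_continuous (continuous_circleMap 0 r) (fun θ => circleMap_mem_closedBall 0 hr0.le θ)
  have hFb : ∀ θ : ℝ, ‖f (circleMap 0 r θ)‖ ≤ 1 := fun θ =>
    hb _ (by rw [norm_circleMap hr0]; exact hr1)
  set Sg : ℂ := ∑ j, (starRingEnd ℂ) ((fun j => (starRingEnd ℂ) (c j)) j) * g (z j) with hSg
  set Sb : ℂ := ∑ j, (starRingEnd ℂ) ((fun j => (starRingEnd ℂ) (c j) * (starRingEnd ℂ) (f (z j))) j) * gt (z j) with hSb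
  have E1 : (∫ θ in (0:ℝ)..(2*π), g (circleMap 0 r θ) * (starRingEnd ℂ) (g (circleMap 0 r θ)))
      = ((2*π:ℝ):ℂ) * Sg :=
    repro_sum hr0 hgDCC hzr _ (fun a ha => repro hr0 hgDCC ha)
  have E3 : (∫ θ in (0:ℝ)..(2*π), gt (circleMap 0 r θ) * (starRingEnd ℂ) (gt (circleMap 0 r θ)))
      = ((2*π:ℝ):ℂ) * Sb :=
    repro_sum hr0 hgtDCC hzr _ (fun a ha => repro hr0 hgtDCC ha)
  have E2 : (∫ θ in (0:ℝ)..(2*π), (f (circleMap 0 r θ) * gt (circleMap 0 r θ)) *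
      (starRingEnd ℂ) (g (circleMap 0 r θ))) = ((2*π:ℝ):ℂ) * Sb := by
    have h : (∫ θ in (0:ℝ)..(2*π), (f (circleMap 0 r θ) * gt (circleMap 0 r θ)) *
        (starRingEnd ℂ) (g (circleMap 0 r θ))) = ((2*π:ℝ):ℂ) *
          ∑ j, (starRingEnd ℂ) ((fun j => (starRingEnd ℂ) (c j)) j) * (f (z j) * gt (z j)) :=
      repro_sum hr0 hfgtDCC hzr _ (fun a ha => repro hr0 hfgtDCC ha)
    rw [h, hSb]
    congr 1
    refine Finset.sum_congr rfl (fun j _ => ?_)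
    simp only [map_mul, Complex.conj_conj]
    ring
  obtain ⟨x, hx0, hx⟩ := key_ineq (fun θ => f (circleMap 0 r θ))
    (fun θ => g (circleMap 0 r θ)) (fun θ => gt (circleMap 0 r θ))
    (hucont hfc) (hucont hgd.continuousOn) (hucont hgtd.continuousOn) hFb Sg Sb E1 E2 E3
  have hT : (∑ i, ∑ j, c i * (starRingEnd ℂ) (c j) *
      ((1 - f (z i) * (starRingEnd ℂ) (f (z j))) /
        (1 - z i * (starRingEnd ℂ) (z j) / ((r:ℂ))^2))) = Sg - Sb := by
    rw [hSg, hSb, ← Finset.sum_sub_distrib]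
    refine Finset.sum_congr rfl (fun i _ => ?_)
    simp only [hgdef, hgtdef, gf, map_mul, Complex.conj_conj]
    rw [Finset.mul_sum, Finset.mul_sum, ← Finset.sum_sub_distrib]
    refine Finset.sum_congr rfl (fun j _ => ?_)
    rw [div_eq_mul_inv]
    ring
  rw [hT, hx]
  exact_mod_cast Complex.zero_le_real.2 hx0


end PickAux

open Complex Finset ComplexOrder

/-- A kernel `K` is positive semi-definite on a subset `D`. -/
def IsPSDKernelOn {γ : Type*} (D : Set γ) (K : γ → γ → ℂ) : Prop :=
  ∀ (m : ℕ) (z : Fin m → γ), (∀ i, z i ∈ D) → ∀ c : Fin m → ℂ,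
    0 ≤ ∑ i, ∑ j, c i * (starRingEnd ℂ) (c j) * K (z i) (z j)

theorem pick_kernel_psd_one_variable (f : ℂ → ℂ)
    (hf : DifferentiableOn ℂ f {z : ℂ | ‖z‖ < 1})
    (hb : ∀ z : ℂ, ‖z‖ < 1 → ‖f z‖ ≤ 1) :
    IsPSDKernelOn {z : ℂ | ‖z‖ < 1}
      (fun z w => (1 - f z * (starRingEnd ℂ) (f w)) / (1 - z * (starRingEnd ℂ) w)) := by
  intro m z hz c
  have hz1 : ∀ i, ‖z i‖ < 1 := fun i => hz i
  show 0 ≤ ∑ i, ∑ j, c i * (starRingEnd ℂ) (c j) *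
      ((1 - f (z i) * (starRingEnd ℂ) (f (z j))) / (1 - z i * (starRingEnd ℂ) (z j)))
  set T : ℝ → ℂ := fun r => ∑ i, ∑ j, c i * (starRingEnd ℂ) (c j) *
      ((1 - f (z i) * (starRingEnd ℂ) (f (z j))) /
        (1 - z i * (starRingEnd ℂ) (z j) / ((r:ℂ))^2)) with hT
  have hne1 : ∀ i j : Fin m, (1:ℂ) - z i * (starRingEnd ℂ) (z j) / (((1:ℝ):ℂ))^2 ≠ 0 := by
    intro i j
    have h : ‖z i * (starRingEnd ℂ) (z j) / (((1:ℝ):ℂ))^2‖ < 1 := by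
      simp only [Complex.ofReal_one, one_pow, div_one, norm_mul, RCLike.norm_conj]
      calc ‖z i‖ * ‖z j‖ ≤ 1 * ‖z j‖ := by gcongr; exact (hz1 i).le
        _ = ‖z j‖ := one_mul _
        _ < 1 := hz1 j
    intro h0
    rw [sub_eq_zero] at h0
    rw [← h0] at h
    simp at h
  have htend : Filter.Tendsto T (nhdsWithin 1 (Set.Iio 1)) (nhds (T 1)) := by
    apply Filter.Tendsto.mono_left ?_ nhdsWithin_le_nhds
    simp only [hT]
    apply tendsto_finset_sum
    intro i _
    apply tendsto_finset_sum
    intro j _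
    apply ContinuousAt.tendsto
    apply ContinuousAt.mul continuousAt_const
    apply ContinuousAt.div continuousAt_const
    · apply ContinuousAt.sub continuousAt_const
      apply ContinuousAt.div continuousAt_const
      · exact (Complex.continuous_ofReal.continuousAt).pow 2
      · norm_num
    · exact hne1 i j
  have h1 : ∀ᶠ r in nhdsWithin (1:ℝ) (Set.Iio 1), ∀ i, ‖z i‖ < r := by
    rw [Filter.eventually_all]
    intro i
    exact Filter.Eventually.filter_mono nhdsWithin_le_nhds (eventually_gt_nhds (hz1 i))
  have h2 : ∀ᶠ r in nhdsWithin (1:ℝ) (Set.Iio 1), (0:ℝ) < r :=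
    Filter.Eventually.filter_mono nhdsWithin_le_nhds (eventually_gt_nhds one_pos)
  have h3 : ∀ᶠ r in nhdsWithin (1:ℝ) (Set.Iio 1), r < 1 :=
    eventually_mem_nhdsWithin.mono (fun r hr => hr)
  have hev : ∀ᶠ r in nhdsWithin (1:ℝ) (Set.Iio 1), 0 ≤ T r := by
    filter_upwards [h1, h2, h3] with r hzr h0r h1r
    exact PickAux.pick_r f hf hb z c h0r h1r hzr
  have him : (T 1).im = 0 := by
    have ht1 : Filter.Tendsto (fun r => (T r).im) (nhdsWithin (1:ℝ) (Set.Iio 1))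
        (nhds ((T 1).im)) := (Complex.continuous_im.tendsto (T 1)).comp htend
    have ht2 : Filter.Tendsto (fun r => (T r).im) (nhdsWithin (1:ℝ) (Set.Iio 1)) (nhds 0) := by
      apply Filter.Tendsto.congr' ?_ (tendsto_const_nhds (α := ℝ))
      filter_upwards [hev] with r hr
      simpa using (Complex.le_def.1 hr).2
    exact tendsto_nhds_unique ht1 ht2
  have hre : 0 ≤ (T 1).re := by
    apply ge_of_tendsto ((Complex.continuous_re.tendsto (T 1)).comp htend)
    filter_upwards [hev] with r hr
    simpa using (Complex.le_def.1 hr).1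
  have hgoal : (∑ i, ∑ j, c i * (starRingEnd ℂ) (c j) *
      ((1 - f (z i) * (starRingEnd ℂ) (f (z j))) / (1 - z i * (starRingEnd ℂ) (z j)))) = T 1 := by
    simp [hT]
  rw [hgoal]
  exact Complex.le_def.2 ⟨by simpa using hre, by simpa using him.symm⟩
end

section
/- Let p ∈ C[z_1,...,z_d] have multidegree at most n with no zeros on the closed polydisk, p̃(z) = z^n·conj(p(1/conj(z))), and dμ = |p|^{-2}dσ on T^d. Then for every multi-index α ∈ Z_+^d with α ≥ n failing (i.e., α_j < n_j for some j) and every β ∈ Z_+^d, the functions z^α and z^β·p̃(z) are orthogonal in L²(μ): ∫_{T^d} z^α · conj(z^β·p̃(z)) · |p(z)|^{-2} dσ(z) = 0. -/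
open MeasureTheory Complex Finset

noncomputable instance : MeasurableSpace Circle := borel Circle
instance : BorelSpace Circle := ⟨rfl⟩

/-- The reflection `p̃(z) = z^n · conj(p(1/conj z₁, …, 1/conj z_d))`, as a function. -/
noncomputable def reflect {d : ℕ} (n : Fin d → ℕ) (p : MvPolynomial (Fin d) ℂ)
    (z : Fin d → ℂ) : ℂ :=
  (∏ j, z j ^ n j) *
    (starRingEnd ℂ) (MvPolynomial.eval (fun j => ((starRingEnd ℂ) (z j))⁻¹) p)

private lemma aux_diff {d : ℕ} (p : MvPolynomial (Fin d) ℂ) (w : Fin d → ℂ) (j : Fin d) :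
    Differentiable ℂ (fun ζ : ℂ => MvPolynomial.eval (Function.update w j ζ) p) := by
  classical
  have h : (fun ζ : ℂ => MvPolynomial.eval (Function.update w j ζ) p)
      = fun ζ => ∑ m ∈ p.support, MvPolynomial.coeff m p *
          ∏ i ∈ m.support, (Function.update w j ζ i) ^ m i := by
    funext ζ; rw [MvPolynomial.eval_eq]
  rw [h]
  refine Differentiable.fun_sum fun m _ => Differentiable.const_mul ?_ _
  refine Differentiable.fun_finsetProd fun i _ => ?_
  rcases eq_or_ne i j with rfl | hij
  · simp only [Function.update_self]
    exact differentiable_id.pow _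
  · simp only [Function.update_of_ne hij]
    exact differentiable_const _

open Metric in
private lemma aux_cauchy {q : ℂ → ℂ}
    (hq : ∀ ζ ∈ closedBall (0:ℂ) 1, DifferentiableAt ℂ q ζ) {m : ℕ} (hm : 1 ≤ m) :
    ∫ θ in (0:ℝ)..(2*Real.pi), (circleMap 0 1 θ) ^ m * q (circleMap 0 1 θ) = 0 := by
  obtain ⟨k, rfl⟩ : ∃ k, m = k + 1 := ⟨m - 1, (Nat.succ_pred_eq_of_pos hm).symm⟩
  have hqc : ContinuousOn q (closedBall (0:ℂ) 1) :=
    fun ζ hζ => (hq ζ hζ).continuousAt.continuousWithinAt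
  have h0 : (∮ z in C((0:ℂ), 1), z ^ (k+1-1) * q z) = 0 := by
    refine circleIntegral_eq_zero_of_differentiable_on_off_countable zero_le_one
      Set.countable_empty (ContinuousOn.mul (continuousOn_pow _) hqc) ?_
    intro ζ hζ
    exact (differentiableAt_pow _).mul (hq ζ (ball_subset_closedBall hζ.1))
  have h1 : (∮ z in C((0:ℂ), 1), z ^ (k+1-1) * q z)
      = ∫ θ in (0:ℝ)..(2*Real.pi),
          Complex.I * ((circleMap 0 1 θ) ^ (k+1) * q (circleMap 0 1 θ)) := by
    simp only [circleIntegral, deriv_circleMap, smul_eq_mul, Nat.add_sub_cancel]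
    congr 1
    funext θ
    ring
  rw [h1, intervalIntegral.integral_const_mul] at h0
  rcases mul_eq_zero.mp h0 with h | h
  · exact absurd h Complex.I_ne_zero
  · exact h

open Metric in
private lemma aux_cauchy' {q : ℂ → ℂ}
    (hq : ∀ ζ ∈ closedBall (0:ℂ) 1, DifferentiableAt ℂ q ζ) {m : ℕ} (hm : 1 ≤ m)
    (c : Circle) :
    ∫ θ in (0:ℝ)..(2*Real.pi),
      ((Circle.exp θ * c : Circle) : ℂ) ^ m * q ((Circle.exp θ * c : Circle) : ℂ) = 0 := by
  have key := aux_cauchy hq hm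
  set G : ℝ → ℂ := fun u => ((Circle.exp u : ℂ)) ^ m * q (Circle.exp u) with hG
  have hGp : Function.Periodic G (2*Real.pi) := fun u => by
    simp only [hG, Circle.periodic_exp u]
  have hshift : ∀ θ : ℝ, Circle.exp θ * c = Circle.exp (θ + Complex.arg c) := by
    intro θ
    have hc : Circle.exp (Complex.arg (c : ℂ)) = c := Circle.exp_arg c
    calc Circle.exp θ * c = Circle.exp θ * Circle.exp (Complex.arg (c : ℂ)) := by rw [hc]
    _ = Circle.exp (θ + Complex.arg (c : ℂ)) := (Circle.exp_add _ _).symm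
  have h2 : (∫ θ in (0:ℝ)..(2*Real.pi),
      ((Circle.exp θ * c : Circle) : ℂ) ^ m * q ((Circle.exp θ * c : Circle) : ℂ))
      = ∫ θ in (0:ℝ)..(2*Real.pi), G (θ + Complex.arg (c:ℂ)) := by
    congr 1
    funext θ
    rw [hshift θ]
  rw [h2, intervalIntegral.integral_comp_add_right G]
  have h3 := hGp.intervalIntegral_add_eq (Complex.arg (c:ℂ)) 0
  rw [zero_add] at h3
  rw [show (0:ℝ) + Complex.arg (c:ℂ) = Complex.arg (c:ℂ) by ring,
    show 2*Real.pi + Complex.arg (c:ℂ) = Complex.arg (c:ℂ) + 2*Real.pi by ring, h3]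
  have hcm : ∀ u : ℝ, circleMap 0 1 u = (Circle.exp u : ℂ) := by
    intro u; simp [circleMap, Circle.coe_exp]
  simpa [hG, hcm] using key

theorem monomials_orthogonal_to_reflected (d : ℕ) (n : Fin d → ℕ)
    (p : MvPolynomial (Fin d) ℂ)
    (hdeg : ∀ m ∈ p.support, ∀ j, m j ≤ n j)
    (hp : ∀ z : Fin d → ℂ, (∀ j, ‖z j‖ ≤ 1) → MvPolynomial.eval z p ≠ 0)
    -- `σ` is the normalized Haar (Lebesgue) measure on the `d`-torus
    (σ : Measure (Fin d → Circle)) [σ.IsHaarMeasure] [IsProbabilityMeasure σ]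
    (α : Fin d → ℕ) (hα : ∃ j, α j < n j) (β : Fin d → ℕ) :
    ∫ z : Fin d → Circle,
        (∏ j, (z j : ℂ) ^ α j) *
          (starRingEnd ℂ) ((∏ j, (z j : ℂ) ^ β j) * reflect n p (fun j => (z j : ℂ))) *
          (((‖MvPolynomial.eval (fun j => (z j : ℂ)) p‖ ^ 2)⁻¹ : ℝ) : ℂ) ∂σ = 0 := by
  classical
  obtain ⟨j, hj⟩ := hα
  set F : (Fin d → Circle) → ℂ := fun z =>
    (∏ i, (z i : ℂ) ^ α i) * (∏ i, (starRingEnd ℂ) ((z i : ℂ)) ^ (β i + n i)) *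
      ((starRingEnd ℂ) (MvPolynomial.eval (fun i => (z i : ℂ)) p))⁻¹ with hFdef
  have hpt : ∀ z : Fin d → Circle, MvPolynomial.eval (fun i => (z i : ℂ)) p ≠ 0 := by
    intro z
    exact hp _ (fun i => by rw [Circle.norm_coe])
  -- Step 1: the integrand equals `F`.
  have step1 : ∀ z : Fin d → Circle,
      (∏ i, (z i : ℂ) ^ α i) *
        (starRingEnd ℂ) ((∏ i, (z i : ℂ) ^ β i) * reflect n p (fun i => (z i : ℂ))) *
        (((‖MvPolynomial.eval (fun i => (z i : ℂ)) p‖ ^ 2)⁻¹ : ℝ) : ℂ) = F z := by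
    intro z
    have hinv : ∀ i, ((starRingEnd ℂ) ((z i : ℂ)))⁻¹ = (z i : ℂ) := by
      intro i
      rw [← Circle.coe_inv_eq_conj, ← Circle.coe_inv, inv_inv]
    have hrefl : reflect n p (fun i => (z i : ℂ))
        = (∏ i, (z i : ℂ) ^ n i) *
          (starRingEnd ℂ) (MvPolynomial.eval (fun i => (z i : ℂ)) p) := by
      unfold reflect
      simp only [hinv]
    set E := MvPolynomial.eval (fun i => (z i : ℂ)) p with hE
    have hE0 : E ≠ 0 := hpt z
    have hcE0 : (starRingEnd ℂ) E ≠ 0 := by simpa using hE0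
    have hnorm : (((‖E‖ ^ 2)⁻¹ : ℝ) : ℂ) = (E * (starRingEnd ℂ) E)⁻¹ := by
      rw [Complex.mul_conj]
      rw [Complex.ofReal_inv]
      congr 1
      rw [Complex.sq_norm]
    rw [hrefl, hnorm, hFdef]
    simp only [map_mul, map_prod, map_pow, Complex.conj_conj, pow_add,
      Finset.prod_mul_distrib]
    rw [← hE]
    field_simp
  have step1' : (fun z : Fin d → Circle =>
      (∏ i, (z i : ℂ) ^ α i) *
        (starRingEnd ℂ) ((∏ i, (z i : ℂ) ^ β i) * reflect n p (fun i => (z i : ℂ))) *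
        (((‖MvPolynomial.eval (fun i => (z i : ℂ)) p‖ ^ 2)⁻¹ : ℝ) : ℂ)) = F :=
    funext step1
  rw [show (∫ z : Fin d → Circle,
        (∏ j, (z j : ℂ) ^ α j) *
          (starRingEnd ℂ) ((∏ j, (z j : ℂ) ^ β j) * reflect n p (fun j => (z j : ℂ))) *
          (((‖MvPolynomial.eval (fun j => (z j : ℂ)) p‖ ^ 2)⁻¹ : ℝ) : ℂ) ∂σ)
      = ∫ z, F z ∂σ by rw [step1']]
  -- the rotation group element
  set g : ℝ → (Fin d → Circle) := fun θ i => if i = j then Circle.exp θ else 1 with hg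
  set m : ℕ := n j + β j - α j with hmdef
  have hm1 : 1 ≤ m := by omega
  -- Step 3: for every fixed z, the rotated integral in θ vanishes.
  have step3 : ∀ z : Fin d → Circle,
      ∫ θ in (0:ℝ)..(2*Real.pi), F (g θ * z) = 0 := by
    intro z
    set zc : Fin d → ℂ := fun i => (z i : ℂ) with hzc
    set q : ℂ → ℂ := fun ζ => (MvPolynomial.eval (Function.update zc j ζ) p)⁻¹ with hq
    have hqd : ∀ ζ ∈ Metric.closedBall (0:ℂ) 1, DifferentiableAt ℂ q ζ := by
      intro ζ hζ
      have hne : MvPolynomial.eval (Function.update zc j ζ) p ≠ 0 := by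
        refine hp _ (fun i => ?_)
        rcases eq_or_ne i j with rfl | hij
        · rw [Function.update_self]
          exact mem_closedBall_zero_iff.mp hζ
        · rw [Function.update_of_ne hij]
          simp [hzc, Circle.norm_coe]
      exact ((aux_diff p zc j).differentiableAt).inv hne
    set C : ℂ := (∏ i ∈ Finset.univ.erase j, zc i ^ α i) *
      (∏ i ∈ Finset.univ.erase j, (starRingEnd ℂ) (zc i) ^ (β i + n i)) with hC
    have claim : ∀ θ : ℝ, F (g θ * z)
        = C * (starRingEnd ℂ)
            (((Circle.exp θ * z j : Circle) : ℂ) ^ m * q ((Circle.exp θ * z j : Circle) : ℂ)) := by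
      intro θ
      set ε : ℂ := ((Circle.exp θ * z j : Circle) : ℂ) with hε
      have hupdate : (fun i => (((g θ * z) i : Circle) : ℂ)) = Function.update zc j ε := by
        funext i
        rcases eq_or_ne i j with rfl | hij
        · simp [hg, hε, hzc, Function.update_self, Pi.mul_apply]
        · simp [hg, hij, Function.update_of_ne hij, hzc, Pi.mul_apply]
      have hcoord : ∀ i, i ≠ j → (((g θ * z) i : Circle) : ℂ) = zc i := by
        intro i hij
        have := congrFun hupdate i
        rwa [Function.update_of_ne hij] at this
      have hcoordj : (((g θ * z) j : Circle) : ℂ) = ε := by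
        have := congrFun hupdate j
        rwa [Function.update_self] at this
      have hprod1 : (∏ i, (((g θ * z) i : Circle) : ℂ) ^ α i)
          = ε ^ α j * ∏ i ∈ Finset.univ.erase j, zc i ^ α i := by
        rw [← Finset.mul_prod_erase Finset.univ _ (Finset.mem_univ j), hcoordj]
        congr 1
        exact Finset.prod_congr rfl fun i hi => by
          rw [hcoord i (Finset.ne_of_mem_erase hi)]
      have hprod2 : (∏ i, (starRingEnd ℂ) (((g θ * z) i : Circle) : ℂ) ^ (β i + n i))
          = (starRingEnd ℂ) ε ^ (β j + n j) *
            ∏ i ∈ Finset.univ.erase j, (starRingEnd ℂ) (zc i) ^ (β i + n i) := by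
        rw [← Finset.mul_prod_erase Finset.univ _ (Finset.mem_univ j), hcoordj]
        congr 1
        exact Finset.prod_congr rfl fun i hi => by
          rw [hcoord i (Finset.ne_of_mem_erase hi)]
      have hεc : ε * (starRingEnd ℂ) ε = 1 := by
        rw [Complex.mul_conj]
        rw [hε, Circle.normSq_coe]
        norm_num
      have hpow : ε ^ α j * (starRingEnd ℂ) ε ^ (β j + n j) = (starRingEnd ℂ) ε ^ m := by
        rw [show β j + n j = m + α j by omega, pow_add]
        rw [show ε ^ α j * ((starRingEnd ℂ) ε ^ m * (starRingEnd ℂ) ε ^ α j)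
          = (ε * (starRingEnd ℂ) ε) ^ α j * (starRingEnd ℂ) ε ^ m by rw [mul_pow]; ring]
        rw [hεc, one_pow, one_mul]
      have hEeq : MvPolynomial.eval (fun i => (((g θ * z) i : Circle) : ℂ)) p
          = MvPolynomial.eval (Function.update zc j ε) p := by rw [hupdate]
      rw [hFdef]
      simp only []
      rw [hprod1, hprod2, hEeq]
      rw [hq]
      simp only [map_mul, map_pow, map_inv₀, Complex.conj_conj]
      rw [hC, ← hpow]
      ring
    have hint0 : (∫ θ in (0:ℝ)..(2*Real.pi), F (g θ * z))
        = C * (starRingEnd ℂ) (∫ θ in (0:ℝ)..(2*Real.pi),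
            ((Circle.exp θ * z j : Circle) : ℂ) ^ m * q ((Circle.exp θ * z j : Circle) : ℂ)) := by
      rw [show (fun θ => F (g θ * z)) = fun θ => C * (starRingEnd ℂ)
          (((Circle.exp θ * z j : Circle) : ℂ) ^ m * q ((Circle.exp θ * z j : Circle) : ℂ)) from
        funext claim]
      rw [intervalIntegral.integral_const_mul]
      congr 1
      simp only [intervalIntegral]
      rw [map_sub, ← integral_conj, ← integral_conj]
    rw [hint0, aux_cauchy' hqd hm1 (z j), map_zero, mul_zero]
  -- continuity of F
  have hcoe : ∀ i : Fin d, Continuous fun z : Fin d → Circle => ((z i : Circle) : ℂ) := by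
    intro i
    exact continuous_subtype_val.comp (continuous_apply i)
  have hevc : Continuous fun z : Fin d → Circle =>
      MvPolynomial.eval (fun i => ((z i : Circle) : ℂ)) p :=
    (MvPolynomial.continuous_eval p).comp (continuous_pi fun i => hcoe i)
  have hFc : Continuous F := by
    rw [hFdef]
    refine Continuous.mul (Continuous.mul ?_ ?_) ?_
    · exact continuous_finset_prod _ fun i _ => (hcoe i).pow _
    · exact continuous_finset_prod _ fun i _ => (Complex.continuous_conj.comp (hcoe i)).pow _
    · refine Continuous.inv₀ (Complex.continuous_conj.comp hevc) ?_
      intro z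
      simpa using hpt z
  have hΦc : Continuous fun q : ℝ × (Fin d → Circle) => F (g q.1 * q.2) := by
    refine hFc.comp ?_
    refine continuous_pi fun i => ?_
    refine Continuous.mul ?_ ((continuous_apply i).comp continuous_snd)
    rcases eq_or_ne i j with rfl | hij
    · simpa [hg] using Circle.exp.continuous.comp' continuous_fst
    · simpa [hg, hij] using continuous_const
  -- Fubini setup
  set μ : Measure ℝ := volume.restrict (Set.Ioc (0:ℝ) (2*Real.pi)) with hμ
  have hμfin : IsFiniteMeasure μ := by
    constructor
    rw [hμ, Measure.restrict_apply_univ, Real.volume_Ioc]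
    exact ENNReal.ofReal_lt_top
  obtain ⟨Cb, hCb⟩ := (isCompact_univ : IsCompact (Set.univ : Set (Fin d → Circle))).exists_bound_of_continuousOn hFc.continuousOn
  have hint : Integrable (Function.uncurry fun θ (z : Fin d → Circle) => F (g θ * z))
      (μ.prod σ) := by
    refine Integrable.mono' (integrable_const Cb) hΦc.aestronglyMeasurable ?_
    exact Filter.Eventually.of_forall fun q => hCb _ (Set.mem_univ _)
  have hswap := integral_integral_swap hint
  have hL : (∫ θ, (∫ z, F (g θ * z) ∂σ) ∂μ) = (2*Real.pi) • (∫ z, F z ∂σ) := by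
    have hI : ∀ θ : ℝ, (∫ z, F (g θ * z) ∂σ) = ∫ z, F z ∂σ := fun θ =>
      integral_mul_left_eq_self F (g θ)
    rw [show (fun θ => ∫ z, F (g θ * z) ∂σ) = fun _ => ∫ z, F z ∂σ from funext hI]
    rw [integral_const]
    congr 1
    rw [hμ, Measure.real, Measure.restrict_apply_univ, Real.volume_Ioc]
    rw [ENNReal.toReal_ofReal (by rw [sub_zero]; positivity)]
    ring
  have hR : (∫ z, (∫ θ, F (g θ * z) ∂μ) ∂σ) = 0 := by
    have hz : ∀ z : Fin d → Circle, (∫ θ, F (g θ * z) ∂μ) = 0 := by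
      intro z
      have := step3 z
      rwa [intervalIntegral.integral_of_le (by positivity)] at this
    rw [show (fun z : Fin d → Circle => ∫ θ, F (g θ * z) ∂μ) = fun _ => (0:ℂ) from
      funext hz]
    simp
  rw [hL, hR] at hswap
  rcases smul_eq_zero.mp hswap with h | h
  · exact absurd h (by positivity)
  · exact h
end

section
/- Let p ∈ C[z_1,...,z_d] have multidegree at most n, p(0) ≠ 0, no zeros on the closed polydisk, p̃(z) = z^n·conj(p(1/conj(z))), and dμ = |p|^{-2}dσ on T^d. If f ∈ L²(μ) has Fourier support contained in {α ∈ Z_+^d : α ≥ n}, is orthogonal in L²(μ) to z^β·p̃ for every β ∈ Z_+^d, then f = 0. -/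
open MeasureTheory Complex Finset
open scoped ENNReal NNReal
open Set Submodule

namespace TorusAux

lemma coe_pow (z : Circle) (k : ℕ) : ((z ^ k : Circle) : ℂ) = (z : ℂ) ^ k := by
  induction k with
  | zero => simp
  | succ k ih => rw [pow_succ, pow_succ, Circle.coe_mul, ih]

lemma coe_zpow (z : Circle) (m : ℤ) : ((z ^ m : Circle) : ℂ) = (z : ℂ) ^ m := by
  cases m with
  | ofNat k => rw [Int.ofNat_eq_coe, zpow_natCast, zpow_natCast, coe_pow]
  | negSucc k => rw [zpow_negSucc, zpow_negSucc, Circle.coe_inv, coe_pow]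

variable {d : ℕ}

/-- The character `z ↦ ∏ j, (z j)^(γ j)` as a continuous map. -/
noncomputable def chi (γ : Fin d → ℤ) : C((Fin d → Circle), ℂ) where
  toFun z := ((∏ j, z j ^ γ j : Circle) : ℂ)
  continuous_toFun := by
    exact (continuous_subtype_val.comp
      (continuous_finset_prod (M := Circle) _ fun j _ => (continuous_apply j).zpow _))

lemma chi_apply (γ : Fin d → ℤ) (z : Fin d → Circle) :
    chi γ z = ∏ j, (z j : ℂ) ^ γ j := by
  simp only [chi, ContinuousMap.coe_mk]
  exact (map_prod Circle.coeHom _ _).trans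
    (Finset.prod_congr rfl fun j _ => coe_zpow _ _)

lemma chi_mul (γ γ' : Fin d → ℤ) : chi γ * chi γ' = chi (γ + γ') := by
  ext z
  simp only [ContinuousMap.mul_apply, chi_apply, Pi.add_apply, ← Finset.prod_mul_distrib]
  exact Finset.prod_congr rfl fun j _ => (zpow_add₀ (Circle.coe_ne_zero _) _ _).symm

lemma conj_coe (z : Circle) : (starRingEnd ℂ) (z : ℂ) = (z : ℂ)⁻¹ := by
  rw [← Circle.coe_inv_eq_conj, Circle.coe_inv]

lemma chi_star (γ : Fin d → ℤ) : star (chi γ) = chi (-γ) := by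
  ext z
  simp only [ContinuousMap.star_apply, chi_apply, Pi.neg_apply, star_prod]
  refine Finset.prod_congr rfl fun j _ => ?_
  rw [show (star ((z j : ℂ) ^ γ j)) = (starRingEnd ℂ) ((z j : ℂ) ^ γ j) from rfl,
    map_zpow₀, conj_coe, inv_zpow, ← zpow_neg]

lemma chi_one : chi (0 : Fin d → ℤ) = 1 := by
  ext z; simp [chi_apply]


open scoped ComplexConjugate

noncomputable def chiSubalgebra (d : ℕ) : StarSubalgebra ℂ C((Fin d → Circle), ℂ) where
  toSubalgebra := Algebra.adjoin ℂ (Set.range (chi (d := d)))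
  star_mem' := by
    show Algebra.adjoin ℂ (Set.range (chi (d := d))) ≤
      star (Algebra.adjoin ℂ (Set.range (chi (d := d))))
    refine Algebra.adjoin_le ?_
    rintro - ⟨γ, rfl⟩
    exact Algebra.subset_adjoin ⟨-γ, (chi_star γ).symm⟩

lemma chiSubalgebra_coe (d : ℕ) :
    Subalgebra.toSubmodule (chiSubalgebra d).toSubalgebra =
      span ℂ (Set.range (chi (d := d))) := by
  apply Algebra.adjoin_eq_span_of_subset
  refine Subset.trans ?_ Submodule.subset_span
  intro x hx
  refine Submonoid.closure_induction (fun _ => id) ⟨0, ?_⟩ ?_ hx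
  · exact chi_one.symm ▸ rfl
  · rintro - - - - ⟨γ, rfl⟩ ⟨γ', rfl⟩
    exact ⟨γ + γ', (chi_mul γ γ').symm⟩

lemma chiSubalgebra_separatesPoints (d : ℕ) : (chiSubalgebra d).SeparatesPoints := by
  intro z w hzw
  obtain ⟨j, hj⟩ : ∃ j, z j ≠ w j := by
    by_contra h
    push_neg at h
    exact hzw (funext h)
  refine ⟨_, ⟨chi (Pi.single j 1), Algebra.subset_adjoin ⟨_, rfl⟩, rfl⟩, ?_⟩
  have hval : ∀ u : Fin d → Circle, chi (Pi.single j 1) u = (u j : ℂ) := by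
    intro u
    rw [chi_apply]
    rw [Finset.prod_eq_single j (fun b _ hb => by
      rw [Pi.single_eq_of_ne hb]; exact zpow_zero _) (fun h => absurd (Finset.mem_univ j) h)]
    rw [Pi.single_eq_same, zpow_one]
  dsimp only
  rw [hval, hval]
  exact fun h => hj (Circle.coe_injective h)

lemma chiSubalgebra_closure_eq_top (d : ℕ) : (chiSubalgebra d).topologicalClosure = ⊤ :=
  ContinuousMap.starSubalgebra_topologicalClosure_eq_top_of_separatesPoints _
    (chiSubalgebra_separatesPoints d)

lemma span_chi_closure_eq_top (d : ℕ) :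
    (span ℂ (Set.range (chi (d := d)))).topologicalClosure = ⊤ := by
  rw [← chiSubalgebra_coe]
  exact congr_arg (Subalgebra.toSubmodule <| StarSubalgebra.toSubalgebra ·)
    (chiSubalgebra_closure_eq_top d)

variable (σ : Measure (Fin d → Circle)) [IsProbabilityMeasure σ]

lemma span_chiLp_closure_eq_top :
    (span ℂ (Set.range (fun γ : Fin d → ℤ =>
      ContinuousMap.toLp (E := ℂ) 2 σ ℂ (chi γ)))).topologicalClosure = ⊤ := by
  convert (ContinuousMap.toLp_denseRange ℂ σ ℂ (by norm_num : (2:ENNReal) ≠ ⊤)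
      ).topologicalClosure_map_submodule (span_chi_closure_eq_top d) using 2
  · rfl
  rw [map_span, ← Set.range_comp]
  simp only [ContinuousLinearMap.coe_coe, Function.comp_def]

lemma ae_zero_of_forall_fourier (f : (Fin d → Circle) → ℂ) (hf : MemLp f 2 σ)
    (h : ∀ γ : Fin d → ℤ,
      ∫ z, f z * (starRingEnd ℂ) (∏ j, (z j : ℂ) ^ γ j) ∂σ = 0) :
    f =ᵐ[σ] 0 := by
  set F := hf.toLp f with hF
  have key : ∀ γ : Fin d → ℤ,
      inner (𝕜 := ℂ) F (ContinuousMap.toLp (E := ℂ) 2 σ ℂ (chi γ)) = 0 := by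
    intro γ
    rw [MeasureTheory.L2.inner_def]
    have h1 := hf.coeFn_toLp
    have h2 := ContinuousMap.coeFn_toLp (p := 2) σ (𝕜 := ℂ) (chi γ)
    have : ∫ z, inner (𝕜 := ℂ) (F z) ((ContinuousMap.toLp (E := ℂ) 2 σ ℂ (chi γ)) z) ∂σ
        = ∫ z, conj (f z) * chi γ z ∂σ := by
      refine integral_congr_ae ?_
      filter_upwards [h1, h2] with z hz1 hz2
      rw [hz1, hz2]; exact RCLike.inner_apply' _ _
    rw [this]
    have : ∫ z, conj (f z) * chi γ z ∂σ
        = conj (∫ z, f z * conj (chi γ z) ∂σ) := by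
      rw [← integral_conj]
      exact integral_congr_ae (Filter.Eventually.of_forall fun z => by simp)
    rw [this]
    have h0 := h γ
    simp_rw [← chi_apply] at h0
    rw [h0, map_zero]
  have hker : span ℂ (Set.range (fun γ : Fin d → ℤ =>
      ContinuousMap.toLp (E := ℂ) 2 σ ℂ (chi γ))) ≤ LinearMap.ker (innerSL ℂ F : Lp ℂ 2 σ →ₗ[ℂ] ℂ) := by
    rw [span_le]
    rintro - ⟨γ, rfl⟩
    exact key γ
  have hclosed : IsClosed ((LinearMap.ker (innerSL ℂ F : Lp ℂ 2 σ →ₗ[ℂ] ℂ) : Submodule ℂ (Lp ℂ 2 σ)) : Set (Lp ℂ 2 σ)) :=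
    ContinuousLinearMap.isClosed_ker (innerSL ℂ F)
  have htop : (span ℂ (Set.range (fun γ : Fin d → ℤ =>
      ContinuousMap.toLp (E := ℂ) 2 σ ℂ (chi γ)))).topologicalClosure ≤
      LinearMap.ker (innerSL ℂ F : Lp ℂ 2 σ →ₗ[ℂ] ℂ) :=
    Submodule.topologicalClosure_minimal _ hker hclosed
  rw [span_chiLp_closure_eq_top] at htop
  have hFF : inner (𝕜 := ℂ) F F = 0 := htop (Submodule.mem_top)
  have hF0 : F = 0 := inner_self_eq_zero.mp hFF
  calc f =ᵐ[σ] F := hf.coeFn_toLp.symm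
    _ =ᵐ[σ] 0 := by rw [hF0]; exact Lp.coeFn_zero _ _ _

end TorusAux

namespace TorusAux

lemma norm_chi (γ : Fin d → ℤ) (z : Fin d → Circle) : ‖chi γ z‖ = 1 := by
  rw [chi_apply, norm_prod]
  refine Finset.prod_eq_one fun j _ => ?_
  rw [norm_zpow]
  rw [Circle.norm_coe, one_zpow]

lemma chi_add_apply (γ γ' : Fin d → ℤ) (z : Fin d → Circle) :
    chi (γ + γ') z = chi γ z * chi γ' z := by
  rw [← chi_mul]; rfl

/-- Key pointwise identity converting the `μ`-integrand of `horth` into a `σ`-integrand. -/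
lemma density_smul_eq (p : MvPolynomial (Fin d) ℂ) (n β : Fin d → ℕ) (z : Fin d → Circle)
    (hPz : MvPolynomial.eval (fun j => (z j : ℂ)) p ≠ 0) (c : ℂ) :
    ((‖MvPolynomial.eval (fun j => (z j : ℂ)) p‖ ^ 2)⁻¹).toNNReal •
      (c * (starRingEnd ℂ) ((∏ j, (z j : ℂ) ^ β j) * reflect n p (fun j => (z j : ℂ))))
    = c * (starRingEnd ℂ) (chi (fun j => (n j : ℤ) + (β j : ℤ)) z) *
        (starRingEnd ℂ) ((MvPolynomial.eval (fun j => (z j : ℂ)) p)⁻¹) := by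
  set P : ℂ := MvPolynomial.eval (fun j => (z j : ℂ)) p with hP
  have hrefl : reflect n p (fun j => (z j : ℂ)) = (∏ j, (z j : ℂ) ^ n j) * (starRingEnd ℂ) P := by
    have he : (fun j => ((starRingEnd ℂ) ((z j : ℂ)))⁻¹) = fun j => (z j : ℂ) :=
      funext fun j => by rw [conj_coe, inv_inv]
    rw [reflect, he, hP]
  have hchi : chi (fun j => (n j : ℤ) + (β j : ℤ)) z
      = (∏ j, (z j : ℂ) ^ n j) * ∏ j, (z j : ℂ) ^ β j := by
    rw [chi_apply, ← Finset.prod_mul_distrib]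
    refine Finset.prod_congr rfl fun j _ => ?_
    rw [zpow_add₀ (Circle.coe_ne_zero _), zpow_natCast, zpow_natCast]
  have hnorm : (0:ℝ) ≤ (‖P‖ ^ 2)⁻¹ := by positivity
  have hsmul : ∀ x : ℂ, ((‖P‖ ^ 2)⁻¹).toNNReal • x = (((‖P‖:ℂ) ^ 2)⁻¹) * x := by
    intro x
    rw [NNReal.smul_def, Real.coe_toNNReal _ hnorm, Complex.real_smul]
    norm_cast
  have hPP : (‖P‖:ℂ) ^ 2 = P * (starRingEnd ℂ) P := by
    rw [Complex.mul_conj']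
  rw [hsmul, hrefl, hchi, hPP]
  have hPc : (starRingEnd ℂ) P ≠ 0 := by
    simpa using hPz
  field_simp
  simp only [map_mul, map_inv₀, Complex.conj_conj]
  field_simp
  rw [mul_assoc _ ((starRingEnd ℂ) P), ← map_mul, mul_one_div_cancel hPz, map_one, mul_one]
end TorusAux

namespace TorusAux

lemma sum_identity (p : MvPolynomial (Fin d) ℂ) (γ : Fin d → ℤ) (z : Fin d → Circle)
    (hPz : MvPolynomial.eval (fun j => (z j : ℂ)) p ≠ 0) (c : ℂ) :
    c * (starRingEnd ℂ) (chi γ z)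
      = ∑ m ∈ p.support, (starRingEnd ℂ) (MvPolynomial.coeff m p) *
          (c * (starRingEnd ℂ) (chi (γ + fun j => (m j : ℤ)) z) *
            (starRingEnd ℂ) ((MvPolynomial.eval (fun j => (z j : ℂ)) p)⁻¹)) := by
  set P : ℂ := MvPolynomial.eval (fun j => (z j : ℂ)) p with hP
  have hm : ∀ m : Fin d →₀ ℕ, chi (γ + fun j => (m j : ℤ)) z
      = chi γ z * ∏ j, (z j : ℂ) ^ m j := by
    intro m
    rw [chi_add_apply]
    congr 1
    rw [chi_apply]
    exact Finset.prod_congr rfl fun j _ => zpow_natCast _ _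
  have hPc : (starRingEnd ℂ) P ≠ 0 := by simpa using hPz
  symm
  calc ∑ m ∈ p.support, (starRingEnd ℂ) (MvPolynomial.coeff m p) *
          (c * (starRingEnd ℂ) (chi (γ + fun j => (m j : ℤ)) z) *
            (starRingEnd ℂ) (P⁻¹))
      = (∑ m ∈ p.support, (starRingEnd ℂ)
          (MvPolynomial.coeff m p * ∏ j, (z j : ℂ) ^ m j)) *
          (c * (starRingEnd ℂ) (chi γ z) * (starRingEnd ℂ) (P⁻¹)) := by
        rw [Finset.sum_mul]
        refine Finset.sum_congr rfl fun m _ => ?_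
        rw [hm m, map_mul, map_mul]
        ring
    _ = (starRingEnd ℂ) P * (c * (starRingEnd ℂ) (chi γ z) * (starRingEnd ℂ) (P⁻¹)) := by
        rw [← map_sum, hP, MvPolynomial.eval_eq']
    _ = c * (starRingEnd ℂ) (chi γ z) := by
        rw [map_inv₀]
        field_simp

end TorusAux

open TorusAux in
theorem orthogonal_to_reflected_shifts_eq_zero (d : ℕ) (n : Fin d → ℕ)
    (p : MvPolynomial (Fin d) ℂ)
    (hdeg : ∀ m ∈ p.support, ∀ j, m j ≤ n j)
    (h0 : MvPolynomial.eval (0 : Fin d → ℂ) p ≠ 0)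
    (hp : ∀ z : Fin d → ℂ, (∀ j, ‖z j‖ ≤ 1) → MvPolynomial.eval z p ≠ 0)
    -- `σ` is the normalized Haar (Lebesgue) measure on the `d`-torus
    (σ : Measure (Fin d → Circle)) [σ.IsHaarMeasure] [IsProbabilityMeasure σ]
    -- `μ` is the Bernstein–Szegő measure `|p|⁻² dσ`
    (μ : Measure (Fin d → Circle))
    (hμ : μ = σ.withDensity (fun z =>
      ENNReal.ofReal ((‖MvPolynomial.eval (fun j => (z j : ℂ)) p‖ ^ 2)⁻¹)))
    (f : (Fin d → Circle) → ℂ) (hf : MemLp f 2 μ)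
    -- the Fourier support of `f` is contained in `{α ∈ ℤ₊^d : α ≥ n}`
    (hsupp : ∀ α : Fin d → ℤ, ¬ (∀ j, (n j : ℤ) ≤ α j) →
      ∫ z : Fin d → Circle, f z * (starRingEnd ℂ) (∏ j, (z j : ℂ) ^ α j) ∂σ = 0)
    -- `f` is orthogonal in `L²(μ)` to `z^β·p̃` for every `β ∈ ℤ₊^d`
    (horth : ∀ β : Fin d → ℕ,
      ∫ z : Fin d → Circle,
        f z * (starRingEnd ℂ)
          ((∏ j, (z j : ℂ) ^ β j) * reflect n p (fun j => (z j : ℂ))) ∂μ = 0) :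
    f =ᵐ[μ] 0 := by
  classical
  have hcoe : Continuous fun z : Fin d → Circle => fun j => (z j : ℂ) :=
    continuous_pi fun j => continuous_subtype_val.comp (continuous_apply j)
  have hPcont : Continuous fun z : Fin d → Circle =>
      MvPolynomial.eval (fun j => (z j : ℂ)) p :=
    (MvPolynomial.continuous_eval p).comp hcoe
  have hPz : ∀ z : Fin d → Circle, MvPolynomial.eval (fun j => (z j : ℂ)) p ≠ 0 := by
    intro z
    refine hp _ fun j => ?_
    exact (Circle.norm_coe _).le
  -- min and max of `‖P‖` on the compact torus
  obtain ⟨z₁, -, hz₁⟩ := isCompact_univ.exists_isMinOn (Set.univ_nonempty)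
    hPcont.norm.continuousOn
  obtain ⟨z₂, -, hz₂⟩ := isCompact_univ.exists_isMaxOn (Set.univ_nonempty)
    hPcont.norm.continuousOn
  set δ : ℝ := ‖MvPolynomial.eval (fun j => ((z₁ j : Circle) : ℂ)) p‖ with hδdef
  set M : ℝ := ‖MvPolynomial.eval (fun j => ((z₂ j : Circle) : ℂ)) p‖ with hMdef
  have hδle : ∀ z : Fin d → Circle, δ ≤ ‖MvPolynomial.eval (fun j => ((z j : Circle) : ℂ)) p‖ :=
    fun z => (isMinOn_iff.mp hz₁) z (Set.mem_univ z)
  have hMle : ∀ z : Fin d → Circle, ‖MvPolynomial.eval (fun j => ((z j : Circle) : ℂ)) p‖ ≤ M :=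
    fun z => (isMaxOn_iff.mp hz₂) z (Set.mem_univ z)
  have hδ : 0 < δ := norm_pos_iff.2 (hPz z₁)
  have hM : 0 < M := lt_of_lt_of_le hδ (hδle z₂)
  -- `f ∈ L²(σ)`
  have hσle : σ ≤ (ENNReal.ofReal (M ^ 2)) • μ := by
    rw [hμ]
    refine Measure.le_intro fun s hs _ => ?_
    have hpt : ∀ z : Fin d → Circle, (1 : ℝ≥0∞) ≤ ENNReal.ofReal (M ^ 2) *
        ENNReal.ofReal ((‖MvPolynomial.eval (fun j => (z j : ℂ)) p‖ ^ 2)⁻¹) := by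
      intro z
      rw [← ENNReal.ofReal_mul (by positivity), ← ENNReal.ofReal_one]
      refine ENNReal.ofReal_le_ofReal ?_
      rw [← div_eq_mul_inv, le_div_iff₀ (pow_pos (norm_pos_iff.2 (hPz z)) 2), one_mul]
      exact pow_le_pow_left₀ (norm_nonneg _) (hMle z) 2
    calc σ s = ∫⁻ _ in s, 1 ∂σ := (setLIntegral_one s).symm
      _ ≤ ∫⁻ z in s, ENNReal.ofReal (M ^ 2) *
            ENNReal.ofReal ((‖MvPolynomial.eval (fun j => (z j : ℂ)) p‖ ^ 2)⁻¹) ∂σ :=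
          lintegral_mono fun z => hpt z
      _ = ENNReal.ofReal (M ^ 2) * ∫⁻ z in s,
            ENNReal.ofReal ((‖MvPolynomial.eval (fun j => (z j : ℂ)) p‖ ^ 2)⁻¹) ∂σ :=
          lintegral_const_mul' _ _ ENNReal.ofReal_ne_top
      _ = ENNReal.ofReal (M ^ 2) * (σ.withDensity (fun z =>
            ENNReal.ofReal ((‖MvPolynomial.eval (fun j => (z j : ℂ)) p‖ ^ 2)⁻¹))) s := by
          rw [withDensity_apply _ hs]
      _ = _ := rfl
  have hf2σ : MemLp f 2 σ :=
    (hf.smul_measure ENNReal.ofReal_ne_top).mono_measure hσle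
  have hIntf : Integrable f σ := hf2σ.integrable one_le_two
  -- measurability of the density
  have hwm : Measurable fun z : Fin d → Circle =>
      Real.toNNReal ((‖MvPolynomial.eval (fun j => (z j : ℂ)) p‖ ^ 2)⁻¹) := by
    refine (continuous_real_toNNReal.comp ?_).measurable
    exact ((hPcont.norm.pow 2).inv₀ fun z => by
      exact pow_ne_zero 2 (norm_ne_zero_iff.2 (hPz z)))
  -- the key orthogonality relations with respect to `σ`
  have hB : ∀ γ : Fin d → ℤ, (∀ j, (n j : ℤ) ≤ γ j) →
      ∫ z, f z * (starRingEnd ℂ) (chi γ z) *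
        (starRingEnd ℂ) ((MvPolynomial.eval (fun j => (z j : ℂ)) p)⁻¹) ∂σ = 0 := by
    intro γ hγ
    have hγβ : γ = fun j => (n j : ℤ) + ((fun j => (γ j - n j).toNat) j : ℤ) := by
      funext j
      have := hγ j
      simp only []
      omega
    have h := horth fun j => (γ j - n j).toNat
    rw [hμ] at h
    have hden : (fun z : Fin d → Circle =>
        ENNReal.ofReal ((‖MvPolynomial.eval (fun j => (z j : ℂ)) p‖ ^ 2)⁻¹)) =
        fun z => ((Real.toNNReal ((‖MvPolynomial.eval (fun j => (z j : ℂ)) p‖ ^ 2)⁻¹) :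
          ℝ≥0) : ℝ≥0∞) := rfl
    rw [hden, integral_withDensity_eq_integral_smul hwm] at h
    rw [hγβ]
    refine Eq.trans ?_ h
    refine integral_congr_ae (Filter.Eventually.of_forall fun z => ?_)
    exact (density_smul_eq p n (fun j => (γ j - n j).toNat) z (hPz z) (f z)).symm
  -- bounded-times-integrable lemma
  have hint : ∀ γ' : Fin d → ℤ, Integrable (fun z => f z * (starRingEnd ℂ) (chi γ' z) *
      (starRingEnd ℂ) ((MvPolynomial.eval (fun j => (z j : ℂ)) p)⁻¹)) σ := by
    intro γ'
    have hφc : Continuous fun z : Fin d → Circle =>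
        (starRingEnd ℂ) (chi γ' z) *
          (starRingEnd ℂ) ((MvPolynomial.eval (fun j => (z j : ℂ)) p)⁻¹) := by
      have h1 : Continuous fun z : Fin d → Circle => (starRingEnd ℂ) (chi γ' z) :=
        continuous_star.comp (chi γ').continuous
      have h2 : Continuous fun z : Fin d → Circle =>
          (starRingEnd ℂ) ((MvPolynomial.eval (fun j => (z j : ℂ)) p)⁻¹) :=
        continuous_star.comp (hPcont.inv₀ hPz)
      exact h1.mul h2
    have hbdd : ∀ z : Fin d → Circle, ‖(starRingEnd ℂ) (chi γ' z) *
        (starRingEnd ℂ) ((MvPolynomial.eval (fun j => (z j : ℂ)) p)⁻¹)‖ ≤ δ⁻¹ := by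
      intro z
      rw [norm_mul, RCLike.norm_conj, RCLike.norm_conj, norm_chi, one_mul, norm_inv]
      exact inv_anti₀ hδ (hδle z)
    have := (hIntf.bdd_mul hφc.aestronglyMeasurable (Filter.Eventually.of_forall hbdd) :)
    refine this.congr (Filter.Eventually.of_forall fun z => ?_)
    ring
  -- all `σ`-Fourier coefficients of `f` vanish
  have hfour : ∀ γ : Fin d → ℤ,
      ∫ z, f z * (starRingEnd ℂ) (∏ j, (z j : ℂ) ^ γ j) ∂σ = 0 := by
    intro γ
    by_cases hγ : ∀ j, (n j : ℤ) ≤ γ j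
    · have step1 : ∫ z, f z * (starRingEnd ℂ) (chi γ z) ∂σ = 0 := by
        have hptws : ∀ z, f z * (starRingEnd ℂ) (chi γ z)
            = ∑ m ∈ p.support, (starRingEnd ℂ) (MvPolynomial.coeff m p) *
                (f z * (starRingEnd ℂ) (chi (γ + fun j => (m j : ℤ)) z) *
                  (starRingEnd ℂ) ((MvPolynomial.eval (fun j => (z j : ℂ)) p)⁻¹)) :=
          fun z => sum_identity p γ z (hPz z) (f z)
        calc ∫ z, f z * (starRingEnd ℂ) (chi γ z) ∂σ
            = ∫ z, ∑ m ∈ p.support, (starRingEnd ℂ) (MvPolynomial.coeff m p) *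
                (f z * (starRingEnd ℂ) (chi (γ + fun j => (m j : ℤ)) z) *
                  (starRingEnd ℂ) ((MvPolynomial.eval (fun j => (z j : ℂ)) p)⁻¹)) ∂σ :=
              integral_congr_ae (Filter.Eventually.of_forall hptws)
          _ = ∑ m ∈ p.support, ∫ z, (starRingEnd ℂ) (MvPolynomial.coeff m p) *
                (f z * (starRingEnd ℂ) (chi (γ + fun j => (m j : ℤ)) z) *
                  (starRingEnd ℂ) ((MvPolynomial.eval (fun j => (z j : ℂ)) p)⁻¹)) ∂σ :=
              integral_finset_sum _ fun m _ => ((hint _).const_mul _)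
          _ = ∑ m ∈ p.support, (starRingEnd ℂ) (MvPolynomial.coeff m p) *
                ∫ z, f z * (starRingEnd ℂ) (chi (γ + fun j => (m j : ℤ)) z) *
                  (starRingEnd ℂ) ((MvPolynomial.eval (fun j => (z j : ℂ)) p)⁻¹) ∂σ :=
              Finset.sum_congr rfl fun m _ => integral_const_mul _ _
          _ = 0 := by
              refine Finset.sum_eq_zero fun m _ => ?_
              rw [hB _ fun j => ?_, mul_zero]
              have := hγ j
              simp only [Pi.add_apply]
              omega
      rw [← step1]
      refine integral_congr_ae (Filter.Eventually.of_forall fun z => ?_)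
      simp only [chi_apply]
    · exact hsupp γ hγ
  have hσ0 : f =ᵐ[σ] 0 := ae_zero_of_forall_fourier σ f hf2σ hfour
  have hac : μ ≪ σ := by
    rw [hμ]
    exact withDensity_absolutelyContinuous σ _
  exact hac.ae_le hσ0
end

section
/- Let K be a positive semi-definite kernel on a set Ω, fix η ∈ Ω, and let f(z) = K(z,η). Then for ε > 0, the kernel K(z,ζ) − ε·f(z)·conj(f(ζ)) is positive semi-definite if and only if ε·K(η,η) ≤ 1. -/
open Complex Finset ComplexOrder

/-- A kernel `K` on a set `Ω` is positive semi-definite. -/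
def IsPSDKernel {Ω : Type*} (K : Ω → Ω → ℂ) : Prop :=
  ∀ (m : ℕ) (z : Fin m → Ω) (c : Fin m → ℂ),
    0 ≤ ∑ i, ∑ j, c i * (starRingEnd ℂ) (c j) * K (z i) (z j)

lemma diag_nonneg {Ω : Type*} {K : Ω → Ω → ℂ} (hK : IsPSDKernel K) (x : Ω) :
    0 ≤ K x x := by
  have := hK 1 ![x] ![1]
  simpa using this

lemma herm {Ω : Type*} {K : Ω → Ω → ℂ} (hK : IsPSDKernel K) (x y : Ω) :
    K y x = (starRingEnd ℂ) (K x y) := by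
  have hx := diag_nonneg hK x
  have hy := diag_nonneg hK y
  have hxi : (K x x).im = 0 := by rw [Complex.le_def] at hx; simpa using hx.2.symm
  have hyi : (K y y).im = 0 := by rw [Complex.le_def] at hy; simpa using hy.2.symm
  have h1 := hK 2 ![x, y] ![1, 1]
  have h2 := hK 2 ![x, y] ![1, Complex.I]
  rw [Complex.le_def] at h1 h2
  simp [Fin.sum_univ_two, Complex.add_im, Complex.mul_im] at h1 h2
  apply Complex.ext
  · simp only [Complex.conj_re]; linarith [h1.2, h2.2, hxi, hyi]
  · simp only [Complex.conj_im]; linarith [h1.2, h2.2, hxi, hyi]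

theorem psd_sub_kernelFunction_iff {Ω : Type*} (K : Ω → Ω → ℂ)
    (hK : IsPSDKernel K) (η : Ω) (ε : ℝ) (hε : 0 < ε) :
    IsPSDKernel (fun z ζ =>
        K z ζ - (ε : ℂ) * K z η * (starRingEnd ℂ) (K ζ η)) ↔
      ε * (K η η).re ≤ 1 := by
  have hdiag := diag_nonneg hK η
  set a : ℝ := (K η η).re with ha
  have ha0 : 0 ≤ a := by rw [Complex.le_def] at hdiag; simpa using hdiag.1
  have haim : (K η η).im = 0 := by rw [Complex.le_def] at hdiag; simpa using hdiag.2.symm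
  have hKa : K η η = (a : ℂ) := by apply Complex.ext <;> simp [ha, haim]
  constructor
  · intro h
    have h1 := h 1 ![η] ![1]
    simp only [Fin.sum_univ_one, Matrix.cons_val_zero, map_one, one_mul, mul_one] at h1
    rw [hKa] at h1
    rw [Complex.le_def] at h1
    have h1re : 0 ≤ a - ε * a * a := by
      have := h1.1
      simpa using this
    nlinarith
  · intro h m z c
    simp only
    set T : ℂ := ∑ i, c i * K (z i) η with hT
    set S : ℂ := ∑ i, ∑ j, c i * (starRingEnd ℂ) (c j) * K (z i) (z j) with hS
    set t : ℂ := -(ε : ℂ) * T with ht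
    have key := hK (m+1) (Fin.snoc z η) (Fin.snoc c t)
    have hA : ∑ i, c i * (starRingEnd ℂ) t * K (z i) η = (starRingEnd ℂ) t * T := by
      rw [hT, Finset.mul_sum]
      exact Finset.sum_congr rfl fun i _ => by ring
    have hB : ∑ j, t * (starRingEnd ℂ) (c j) * K η (z j) = t * (starRingEnd ℂ) T := by
      rw [hT, map_sum, Finset.mul_sum]
      refine Finset.sum_congr rfl fun j _ => ?_
      rw [herm hK (z j) η, map_mul]
      ring
    have expand : (∑ i : Fin (m+1), ∑ j : Fin (m+1), (Fin.snoc c t : Fin (m+1) → ℂ) i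
          * (starRingEnd ℂ) ((Fin.snoc c t : Fin (m+1) → ℂ) j)
          * K ((Fin.snoc z η : Fin (m+1) → Ω) i) ((Fin.snoc z η : Fin (m+1) → Ω) j))
        = S + (starRingEnd ℂ) t * T + t * (starRingEnd ℂ) T
          + t * (starRingEnd ℂ) t * K η η := by
      simp only [Fin.sum_univ_castSucc, Fin.snoc_castSucc, Fin.snoc_last]
      rw [Finset.sum_add_distrib, hA, hB, ← hS]
      ring
    rw [expand] at key
    have hN : T * (starRingEnd ℂ) T = ((Complex.normSq T : ℝ) : ℂ) := Complex.mul_conj T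
    set N : ℝ := Complex.normSq T with hNdef
    have hN0 : 0 ≤ N := Complex.normSq_nonneg T
    have hgoal : (∑ i, ∑ j, c i * (starRingEnd ℂ) (c j) *
          (K (z i) (z j) - (ε : ℂ) * K (z i) η * (starRingEnd ℂ) (K (z j) η)))
        = S - (ε : ℂ) * (N : ℂ) := by
      rw [← hN, hS, hT, map_sum, Finset.sum_mul_sum, Finset.mul_sum, ← Finset.sum_sub_distrib]
      refine Finset.sum_congr rfl fun i _ => ?_
      rw [Finset.mul_sum, ← Finset.sum_sub_distrib]
      refine Finset.sum_congr rfl fun j _ => ?_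
      rw [map_mul]
      ring
    rw [hgoal]
    have hεN : ε * N * (ε * a) ≤ ε * N * 1 :=
      mul_le_mul_of_nonneg_left h (by positivity)
    have hrest : (0:ℂ) ≤ ((ε * N - ε * N * (ε * a) : ℝ) : ℂ) := by
      rw [Complex.zero_le_real]
      linarith
    have hsum := add_nonneg key hrest
    convert hsum using 1
    rw [ht, hKa]
    simp only [map_mul, map_neg, Complex.conj_ofReal]
    push_cast
    linear_combination (2*(ε:ℂ) - (ε:ℂ)^2 * (a:ℂ)) * hN
end

section
/- Let d ≥ 2, f : D^d → C holomorphic with |f| ≤ 1, and fix j ≠ k in {1,...,d}. Suppose S ⊔ T = {1,...,d} with j ∈ S, k ∈ T, and suppose K_S, L_T are positive semi-definite kernels with K_S j-contractive, L_T k-contractive, and (1 − f(z)conj(f(ζ)))/∏_{r=1}^d (1 − z_r conj(ζ_r)) = K_S + L_T. Then there exist positive semi-definite kernels K, K' on D^d with 1 − f(z)conj(f(ζ)) = ∏_{r≠j}(1 − z_r conj(ζ_r))·K(z,ζ) + ∏_{r≠k}(1 − z_r conj(ζ_r))·K'(z,ζ). -/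
open Complex Finset ComplexOrder

/-- The open unit polydisk in `ℂ^d`. -/
def Polydisk (d : ℕ) : Set (Fin d → ℂ) := {z | ∀ j, ‖z j‖ < 1}

/-- A kernel `K` on the polydisk is `j`-contractive: `(1 - z_j conj(ζ_j)) K` is PSD. -/
def JContractive (d : ℕ) (j : Fin d) (K : (Fin d → ℂ) → (Fin d → ℂ) → ℂ) : Prop :=
  IsPSDKernelOn (Polydisk d)
    (fun z ζ => (1 - z j * (starRingEnd ℂ) (ζ j)) * K z ζ)

theorem gkvw_from_splitting (d : ℕ) (hd : 2 ≤ d)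
    (f : (Fin d → ℂ) → ℂ)
    (hf : DifferentiableOn ℂ f (Polydisk d))
    (hb : ∀ z ∈ Polydisk d, ‖f z‖ ≤ 1)
    (j k : Fin d) (hjk : j ≠ k)
    (S T : Set (Fin d)) (hST : S ∪ T = Set.univ) (hdisj : S ∩ T = ∅)
    (hj : j ∈ S) (hk : k ∈ T)
    (KS LT : (Fin d → ℂ) → (Fin d → ℂ) → ℂ)
    (hKS : IsPSDKernelOn (Polydisk d) KS) (hLT : IsPSDKernelOn (Polydisk d) LT)
    (hKSj : JContractive d j KS) (hLTk : JContractive d k LT)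
    (hsum : ∀ z ∈ Polydisk d, ∀ ζ ∈ Polydisk d,
      (1 - f z * (starRingEnd ℂ) (f ζ)) /
          ∏ r, (1 - z r * (starRingEnd ℂ) (ζ r)) = KS z ζ + LT z ζ) :
    ∃ K K' : (Fin d → ℂ) → (Fin d → ℂ) → ℂ,
      IsPSDKernelOn (Polydisk d) K ∧ IsPSDKernelOn (Polydisk d) K' ∧
      ∀ z ∈ Polydisk d, ∀ ζ ∈ Polydisk d,
        1 - f z * (starRingEnd ℂ) (f ζ) =
          (∏ r ∈ Finset.univ.erase j, (1 - z r * (starRingEnd ℂ) (ζ r))) * K z ζ +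
          (∏ r ∈ Finset.univ.erase k, (1 - z r * (starRingEnd ℂ) (ζ r))) * K' z ζ := by
  refine ⟨fun z ζ => (1 - z j * (starRingEnd ℂ) (ζ j)) * KS z ζ,
    fun z ζ => (1 - z k * (starRingEnd ℂ) (ζ k)) * LT z ζ, hKSj, hLTk, ?_⟩
  intro z hz ζ hζ
  have hfac : ∀ r : Fin d, (1 - z r * (starRingEnd ℂ) (ζ r)) ≠ 0 := by
    intro r h
    have h1 : z r * (starRingEnd ℂ) (ζ r) = 1 := by linear_combination -h
    have : ‖z r * (starRingEnd ℂ) (ζ r)‖ < 1 := by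
      rw [norm_mul, RCLike.norm_conj]
      calc ‖z r‖ * ‖ζ r‖ ≤ 1 * ‖ζ r‖ := by
            exact mul_le_mul_of_nonneg_right (hz r).le (norm_nonneg _)
        _ < 1 := by simpa using hζ r
    rw [h1] at this; simp at this
  have hprod : (∏ r, (1 - z r * (starRingEnd ℂ) (ζ r))) ≠ 0 :=
    Finset.prod_ne_zero_iff.mpr fun r _ => hfac r
  have hs := hsum z hz ζ hζ
  have key : (1 - f z * (starRingEnd ℂ) (f ζ)) =
      (∏ r, (1 - z r * (starRingEnd ℂ) (ζ r))) * (KS z ζ + LT z ζ) := by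
    rw [← hs, mul_div_cancel₀ _ hprod]
  have hj' : (∏ r ∈ Finset.univ.erase j, (1 - z r * (starRingEnd ℂ) (ζ r))) *
      (1 - z j * (starRingEnd ℂ) (ζ j)) = ∏ r, (1 - z r * (starRingEnd ℂ) (ζ r)) := by
    rw [Finset.prod_erase_mul _ _ (Finset.mem_univ j)]
  have hk' : (∏ r ∈ Finset.univ.erase k, (1 - z r * (starRingEnd ℂ) (ζ r))) *
      (1 - z k * (starRingEnd ℂ) (ζ k)) = ∏ r, (1 - z r * (starRingEnd ℂ) (ζ r)) := by
    rw [Finset.prod_erase_mul _ _ (Finset.mem_univ k)]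
  rw [key]; ring_nf
  linear_combination (KS z ζ) * hj'.symm + (LT z ζ) * hk'.symm
end
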